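/- Let α_R, α_F ∈ [0,1), let R be the real 2×2 matrix with rows (1, −α_R) and (−α_F, 1), let T_D : ℝ ⇒ ℝ be a monotone set-valued operator, define T_NPN : ℝ² ⇒ ℝ² by T_NPN(v₁,v₂) := {R·(u₁,u₂) : u₁ ∈ T_D(v₁), u₂ ∈ T_D(v₂)}, and for r > 0 set T_{NPN,r} := T_NPN + (1/r)·id (graph {(v, w + (1/r)v) : (v,w) ∈ graph T_NPN}). Then T_{NPN,r} is (1/(2r), −r/2)-semimonotone: ⟨x − y, u − v⟩ ≥ (1/(2r))·‖x − y‖² − (r/2)·‖u − v‖² for all (x,u), (y,v) in the graph of T_{NPN,r}. -/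

import Mathlib

lemma keyD (aR aF t1 t2 : ℝ) (h1 : 0 ≤ aR) (h2 : aR ≤ 1) (h3 : 0 ≤ aF) (h4 : aF ≤ 1)
    (h5 : t1*(t1-aR*t2) ≤ 0) (ht2 : 0 ≤ t2) : (t1-aR*t2)^2 ≤ (t2-aF*t1)^2 := by
  have ht1 : 0 ≤ t1 := by nlinarith [mul_nonneg h1 ht2]
  have hle : t1 ≤ aR*t2 := by
    rcases eq_or_lt_of_le ht1 with h | h
    · nlinarith [mul_nonneg h1 ht2]
    · nlinarith
  have hb : 0 ≤ t2 - aF*t1 := by nlinarith [mul_nonneg h3 (mul_nonneg h1 ht2)]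
  have hba : aR*t2 - t1 ≤ t2 - aF*t1 := by nlinarith [mul_nonneg (sub_nonneg.2 h2) ht2, mul_nonneg (sub_nonneg.2 h4) ht1]
  nlinarith [mul_nonneg hb hb, sq_nonneg (t1 - aR*t2)]

lemma keyD' (aR aF t1 t2 : ℝ) (h1 : 0 ≤ aR) (h2 : aR ≤ 1) (h3 : 0 ≤ aF) (h4 : aF ≤ 1)
    (h5 : t1*(t1-aR*t2) ≤ 0) : (t1-aR*t2)^2 ≤ (t2-aF*t1)^2 := by
  rcases le_or_gt 0 t2 with h | h
  · exact keyD aR aF t1 t2 h1 h2 h3 h4 h5 h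
  · have := keyD aR aF (-t1) (-t2) h1 h2 h3 h4 (by nlinarith) (by linarith)
    nlinarith [this]

lemma core (aR aF x1 x2 t1 t2 : ℝ) (h1 : 0 ≤ aR) (h2 : aR < 1) (h3 : 0 ≤ aF) (h4 : aF < 1)
    (hp : 0 ≤ x1*t1) (hq : 0 ≤ x2*t2) :
    0 ≤ x1^2 + x2^2 + 2*x1*(t1 - aR*t2) + 2*x2*(t2 - aF*t1)
      + ((t1-aR*t2)^2 + (t2-aF*t1)^2)/2 := by
  rcases le_or_gt (t1*(t1-aR*t2)) 0 with h5 | h5 <;>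
    rcases le_or_gt (t2*(t2-aF*t1)) 0 with h6 | h6
  · -- both ≤ 0 : t1 = t2 = 0
    have hC : 0 ≤ (aR*(t1*t2) - t1^2) * t2^2 := mul_nonneg (by nlinarith) (sq_nonneg t2)
    have hP : 0 ≤ t1*t2 := by nlinarith [mul_nonneg h1 (sq_nonneg t2), hC]
    have hB : 0 ≤ aR*(-(t2*(t2-aF*t1))*(t1*t2)) := mul_nonneg h1 (mul_nonneg (by linarith) hP)
    have hRF : aR*aF < 1 := by nlinarith
    have hP0 : t1*t2 = 0 := by
      rcases eq_or_lt_of_le hP with h | h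
      · exact h.symm
      · exfalso
        have hprod := mul_pos (sub_pos.2 hRF) (mul_pos h h)
        nlinarith [hprod, hC, hB]
    have ht1 : t1 = 0 := by nlinarith [sq_nonneg t1]
    have ht2 : t2 = 0 := by nlinarith [sq_nonneg t2]
    rw [ht1, ht2]; nlinarith [sq_nonneg x1, sq_nonneg x2]
  · -- t1w1 ≤ 0, t2w2 > 0
    have ht2 : t2 ≠ 0 := by rintro rfl; simp at h6
    have ht2sq : 0 < t2^2 := by positivity
    have hx2 : 0 ≤ x2*(t2-aF*t1) := by
      have h7 : 0 ≤ (x2*t2) * (t2*(t2-aF*t1)) := mul_nonneg hq h6.le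
      nlinarith [mul_pos ht2sq ht2sq]
    have hww := keyD' aR aF t1 t2 h1 h2.le h3 h4.le h5
    nlinarith [sq_nonneg (x1 + (t1 - aR*t2)), sq_nonneg x2]
  · -- t1w1 > 0, t2w2 ≤ 0
    have ht1 : t1 ≠ 0 := by rintro rfl; simp at h5
    have ht1sq : 0 < t1^2 := by positivity
    have hx1 : 0 ≤ x1*(t1-aR*t2) := by
      have h7 : 0 ≤ (x1*t1) * (t1*(t1-aR*t2)) := mul_nonneg hp h5.le
      nlinarith [mul_pos ht1sq ht1sq]
    have hww := keyD' aF aR t2 t1 h3 h4.le h1 h2.le h6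
    nlinarith [sq_nonneg (x2 + (t2 - aF*t1)), sq_nonneg x1]
  · -- both > 0
    have ht1 : t1 ≠ 0 := by rintro rfl; simp at h5
    have ht2 : t2 ≠ 0 := by rintro rfl; simp at h6
    have hx1 : 0 ≤ x1*(t1-aR*t2) := by
      have h7 : 0 ≤ (x1*t1) * (t1*(t1-aR*t2)) := mul_nonneg hp h5.le
      nlinarith [pow_pos (abs_pos.2 ht1) 2, sq_abs t1, mul_pos (pow_pos (abs_pos.2 ht1) 2) (pow_pos (abs_pos.2 ht1) 2)]
    have hx2 : 0 ≤ x2*(t2-aF*t1) := by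
      have h7 : 0 ≤ (x2*t2) * (t2*(t2-aF*t1)) := mul_nonneg hq h6.le
      nlinarith [pow_pos (abs_pos.2 ht2) 2, sq_abs t2, mul_pos (pow_pos (abs_pos.2 ht2) 2) (pow_pos (abs_pos.2 ht2) 2)]
    nlinarith [sq_nonneg (t1-aR*t2), sq_nonneg (t2-aF*t1), sq_nonneg x1, sq_nonneg x2]



/-- The Ebers–Moll matrix with rows `(1, -αR)` and `(-αF, 1)`, applied to a vector of
`ℝ²` (with the Euclidean inner product and norm). -/
noncomputable def applyEM (aR aF : ℝ) (w : EuclideanSpace ℝ (Fin 2)) :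
    EuclideanSpace ℝ (Fin 2) :=
  (WithLp.equiv 2 (Fin 2 → ℝ)).symm
    ((Matrix.of ![![1, -aR], ![-aF, 1]]).mulVec (WithLp.equiv 2 (Fin 2 → ℝ) w))

/-- A set-valued operator `T_D : ℝ ⇒ ℝ` is monotone if `(u - v)(x - y) ≥ 0` whenever
`u ∈ T_D(x)` and `v ∈ T_D(y)`. -/
def MonotoneSetValued (TD : ℝ → Set ℝ) : Prop :=
  ∀ ⦃x u y v : ℝ⦄, u ∈ TD x → v ∈ TD y → (u - v) * (x - y) ≥ 0

/-- The Ebers–Moll transistor operator `T_NPN : ℝ² ⇒ ℝ²` built from the diode law `T_D`. -/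
noncomputable def TNPN (aR aF : ℝ) (TD : ℝ → Set ℝ) (v : EuclideanSpace ℝ (Fin 2)) :
    Set (EuclideanSpace ℝ (Fin 2)) :=
  {w | ∃ u₁ ∈ TD (v 0), ∃ u₂ ∈ TD (v 1),
    w = applyEM aR aF ((WithLp.equiv 2 (Fin 2 → ℝ)).symm ![u₁, u₂])}

/-- `T_NPN + (1/r)·id`, the transistor with leakage resistance `r`. -/
noncomputable def TNPNr (aR aF : ℝ) (TD : ℝ → Set ℝ) (r : ℝ)
    (v : EuclideanSpace ℝ (Fin 2)) : Set (EuclideanSpace ℝ (Fin 2)) :=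
  (fun w => w + (1 / r) • v) '' TNPN aR aF TD v


theorem stmt_16 (aR aF : ℝ) (haR : aR ∈ Set.Ico (0 : ℝ) 1) (haF : aF ∈ Set.Ico (0 : ℝ) 1)
    (TD : ℝ → Set ℝ) (hTD : MonotoneSetValued TD) (r : ℝ) (hr : r > 0) :
    ∀ ⦃x u y v : EuclideanSpace ℝ (Fin 2)⦄,
      u ∈ TNPNr aR aF TD r x → v ∈ TNPNr aR aF TD r y →
      (inner ℝ (x - y) (u - v) : ℝ) ≥ 1 / (2 * r) * ‖x - y‖ ^ 2 - r / 2 * ‖u - v‖ ^ 2 := by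
  intro x u y v hu hv
  obtain ⟨w, ⟨a1, ha1, a2, ha2, rfl⟩, rfl⟩ := hu
  obtain ⟨w', ⟨b1, hb1, b2, hb2, rfl⟩, rfl⟩ := hv
  have m1 := hTD ha1 hb1
  have m2 := hTD ha2 hb2
  have expand : ∀ a b : EuclideanSpace ℝ (Fin 2), (inner ℝ a b : ℝ) = a 0 * b 0 + a 1 * b 1 := by
    intro a b
    simp [PiLp.inner_apply, RCLike.inner_apply, Fin.sum_univ_two]
    ring
  have nrm : ∀ a : EuclideanSpace ℝ (Fin 2), ‖a‖^2 = a 0^2 + a 1^2 := by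
    intro a; rw [← real_inner_self_eq_norm_sq, expand]; ring
  have em0 : ∀ c1 c2 : ℝ, applyEM aR aF ((WithLp.equiv 2 (Fin 2 → ℝ)).symm ![c1,c2]) 0
      = c1 - aR*c2 := by
    intro c1 c2
    simp [applyEM, Matrix.mulVec, dotProduct, Fin.sum_univ_two]
    ring
  have em1 : ∀ c1 c2 : ℝ, applyEM aR aF ((WithLp.equiv 2 (Fin 2 → ℝ)).symm ![c1,c2]) 1
      = -aF*c1 + c2 := by
    intro c1 c2
    simp [applyEM, Matrix.mulVec, dotProduct, Fin.sum_univ_two]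
    ring
  have key := core aR aF (x 0 - y 0) (x 1 - y 1) (r*(a1-b1)) (r*(a2-b2)) haR.1 haR.2 haF.1 haF.2
    (by nlinarith) (by nlinarith)
  rw [ge_iff_le, ← sub_nonneg]
  have heq : (inner ℝ (x - y)
        (applyEM aR aF ((WithLp.equiv 2 (Fin 2 → ℝ)).symm ![a1,a2]) + (1/r) • x
          - (applyEM aR aF ((WithLp.equiv 2 (Fin 2 → ℝ)).symm ![b1,b2]) + (1/r) • y)) : ℝ)
      - (1 / (2 * r) * ‖x - y‖ ^ 2 - r / 2
        * ‖applyEM aR aF ((WithLp.equiv 2 (Fin 2 → ℝ)).symm ![a1,a2]) + (1/r) • x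
          - (applyEM aR aF ((WithLp.equiv 2 (Fin 2 → ℝ)).symm ![b1,b2]) + (1/r) • y)‖ ^ 2)
      = (1/r) * ((x 0 - y 0)^2 + (x 1 - y 1)^2
          + 2*(x 0 - y 0)*((r*(a1-b1)) - aR*(r*(a2-b2)))
          + 2*(x 1 - y 1)*((r*(a2-b2)) - aF*(r*(a1-b1)))
          + (((r*(a1-b1))-aR*(r*(a2-b2)))^2 + ((r*(a2-b2))-aF*(r*(a1-b1)))^2)/2) := by
    rw [expand, nrm, nrm]
    simp only [PiLp.sub_apply, PiLp.add_apply, PiLp.smul_apply, em0, em1, smul_eq_mul]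
    field_simp
    ring
  rw [heq]
  exact mul_nonneg (by positivity) key
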